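/- arXiv:1811.05574 — 4 statements merged into one kernel-verified Lean document; each statement's English description precedes it below -/
import Mathlib

section
/- Let F₀ = {f_k : k ∈ ℕ} be a family of functions ℕ → ℕ and let f : ℕ → ℕ be eventually different from every f_k. Suppose h* : ℕ → ℕ satisfies that N = {n : h*(n) = f(n)} is infinite, and g* : ℕ → ℕ is increasing with g*(k) ≥ m_k for all k, where m_k is least so that f(n) ∉ {f_0(n),…,f_k(n)} for all n ≥ m_k. Define h(n) = h*(n) if h*(n) ∉ {f_0(n),…,f_k(n)} (where k is such that g*(k) ≤ n < g*(k+1)), and h(n) = min(ℕ \ {f_0(n),…,f_k(n)}) otherwise. Then h is eventually different from each f_k, and h agrees with f on all of N (hence h is not eventually different from f). -/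
/-! On the `k`-th block `[gs k, gs (k+1))` the function `h` avoids `F 0 n, …, F k n`: either
`hs n` already does, or `h n` is the least value that does, which exists because `f n` is one
(as `n ≥ gs k ≥ m k`). Since the block index of `n` tends to infinity, `h` is eventually
different from every `F k`. Where `hs n = f n`, the value `hs n` is never replaced, so `h`
agrees with `f` on the infinite set `N`. -/

def EvDiff (f g : ℕ → ℕ) : Prop := ∃ n : ℕ, ∀ m : ℕ, n ≤ m → f m ≠ g m

lemma StrictMono.exists_le_lt_succ {g : ℕ → ℕ} (hg : StrictMono g) {n : ℕ}
    (hn : g 0 ≤ n) : ∃ k, g k ≤ n ∧ n < g (k + 1) := by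
  let P (k : ℕ) : Prop := g k ≤ n
  refine ⟨Nat.findGreatest P n, Nat.findGreatest_spec (P := P) (Nat.zero_le n) hn, ?_⟩
  by_contra! hle
  exact Nat.not_succ_le_self _ (Nat.le_findGreatest (P := P) ((hg.id_le _).trans hle) hle)

lemma StrictMono.le_of_le_of_lt_succ {β : Type*} [Preorder β] {g : ℕ → β} (hg : StrictMono g)
    {k k' : ℕ} {x : β} (hk : g k ≤ x) (hk' : x < g (k' + 1)) : k ≤ k' :=
  Nat.lt_succ_iff.mp (hg.lt_iff_lt.mp (hk.trans_lt hk'))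

lemma mem_of_eq_or_eq_sInf {S : Set ℕ} (hS : S.Nonempty) {a b : ℕ}
    (hb : (a ∈ S → b = a) ∧ (a ∉ S → b = sInf S)) : b ∈ S := by
  by_cases ha : a ∈ S
  · exact hb.1 ha ▸ ha
  · exact hb.2 ha ▸ Nat.sInf_mem hS

lemma not_evDiff_of_infinite_setOf_eq {f g : ℕ → ℕ} (hfg : {n | f n = g n}.Infinite) :
    ¬ EvDiff f g := by
  rintro ⟨N, hN⟩
  obtain ⟨n, hfg_n, hNn⟩ := hfg.exists_gt N
  exact hN n hNn.le hfg_n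

theorem stmt3_general (F : ℕ → ℕ → ℕ) (f hs gs m h : ℕ → ℕ)
    (hm : ∀ k n, m k ≤ n → ∀ j, j ≤ k → f n ≠ F j n)
    (hN : {n : ℕ | hs n = f n}.Infinite)
    (hg0 : gs 0 = 0) (hgmono : StrictMono gs) (hgm : ∀ k, m k ≤ gs k)
    (hh : ∀ n k, gs k ≤ n → n < gs (k + 1) →
      ((∀ j, j ≤ k → hs n ≠ F j n) → h n = hs n) ∧
      (¬ (∀ j, j ≤ k → hs n ≠ F j n) →
        h n = sInf {v : ℕ | ∀ j, j ≤ k → v ≠ F j n})) :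
    (∀ k, EvDiff h (F k)) ∧ (∀ n, hs n = f n → h n = f n) ∧ ¬ EvDiff h f := by
  have block (n : ℕ) : ∃ k, gs k ≤ n ∧ n < gs (k + 1) :=
    hgmono.exists_le_lt_succ (hg0.trans_le n.zero_le)
  have f_avoids {k n : ℕ} (hn : gs k ≤ n) : ∀ j ≤ k, f n ≠ F j n :=
    hm k n ((hgm k).trans hn)
  have h_eq_f (n : ℕ) (hn : hs n = f n) : h n = f n := by
    obtain ⟨k, hk, hk'⟩ := block n
    rw [(hh n k hk hk').1 (hn ▸ f_avoids hk), hn]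
  refine ⟨fun k ↦ ⟨gs k, fun n hn ↦ ?_⟩, h_eq_f,
    not_evDiff_of_infinite_setOf_eq (hN.mono h_eq_f)⟩
  obtain ⟨k', hk', hnk'⟩ := block n
  have h_avoids : ∀ j ≤ k', h n ≠ F j n :=
    mem_of_eq_or_eq_sInf (S := {v | ∀ j ≤ k', v ≠ F j n}) ⟨f n, f_avoids hk'⟩
      (hh n k' hk' hnk')
  exact h_avoids k (hgmono.le_of_le_of_lt_succ hn hnk')

theorem stmt3 (F : ℕ → ℕ → ℕ) (f hs gs m h : ℕ → ℕ)
    (hED : ∀ k, EvDiff f (F k))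
    (hm : ∀ k n, m k ≤ n → ∀ j, j ≤ k → f n ≠ F j n)
    (hminj : Function.Injective m)
    (hN : {n : ℕ | hs n = f n}.Infinite)
    (hg0 : gs 0 = 0) (hgmono : StrictMono gs) (hgm : ∀ k, m k ≤ gs k)
    (hh : ∀ n k, gs k ≤ n → n < gs (k + 1) →
      ((∀ j, j ≤ k → hs n ≠ F j n) → h n = hs n) ∧
      (¬ (∀ j, j ≤ k → hs n ≠ F j n) →
        h n = sInf {v : ℕ | ∀ j, j ≤ k → v ≠ F j n})) :
    (∀ k, EvDiff h (F k)) ∧ (∀ n, hs n = f n → h n = f n) ∧ ¬ EvDiff h f :=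
  stmt3_general F f hs gs m h hm hN hg0 hgmono hgm hh
end

section
/- Let E ⊆ (ℕ → ℕ) be an eventually different family, R : E → (ℕ → ℕ) any function, and define E' = {g_{h,R(h)} : h ∈ E}, where g_{h,z}(2m) = h(m) and g_{h,z}(2m+1) = #̃(h ↾ (2m+1), z ↾ (2m+1)) for a fixed bijection #̃ on pairs of equal-length finite sequences. Then E' is an eventually different family, and if E is maximal then so is E'. -/
def EDFam (E : Set (ℕ → ℕ)) : Prop := ∀ f ∈ E, ∀ g ∈ E, f ≠ g → EvDiff f g

/-- `gfun e h z` is the function with `g (2m) = h m` and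
`g (2m+1) = e (h ↾ (2m+1), z ↾ (2m+1))`. -/
def gfun (e : (Σ n : ℕ, (Fin n → ℕ) × (Fin n → ℕ)) → ℕ) (h z : ℕ → ℕ) : ℕ → ℕ :=
  fun n => if n % 2 = 0 then h (n / 2) else e ⟨n, fun i => h i.1, fun i => z i.1⟩

open Filter Function

theorem evDiff_iff_eventually {f g : ℕ → ℕ} : EvDiff f g ↔ ∀ᶠ m in atTop, f m ≠ g m :=
  eventually_atTop.symm

theorem EvDiff.comp {f g : ℕ → ℕ} {φ : ℕ → ℕ} (hfg : EvDiff f g) (hφ : Tendsto φ atTop atTop) :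
    EvDiff (f ∘ φ) (g ∘ φ) :=
  evDiff_iff_eventually.2 (hφ.eventually (evDiff_iff_eventually.1 hfg))

section gfun

variable (e : (Σ n : ℕ, (Fin n → ℕ) × (Fin n → ℕ)) → ℕ)

theorem gfun_two_mul (h z : ℕ → ℕ) (m : ℕ) : gfun e h z (2 * m) = h m := by
  simp [gfun]

theorem gfun_two_mul_add_one (h z : ℕ → ℕ) (m : ℕ) :
    gfun e h z (2 * m + 1) = e ⟨2 * m + 1, fun i => h i.1, fun i => z i.1⟩ := by
  simp [gfun]

theorem gfun_comp_two_mul (h z : ℕ → ℕ) : gfun e h z ∘ (2 * ·) = h :=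
  funext (gfun_two_mul e h z)

variable {e}

theorem EvDiff.gfun (he : Injective e) {h₁ h₂ : ℕ → ℕ} (hh : EvDiff h₁ h₂) (z₁ z₂ : ℕ → ℕ) :
    EvDiff (gfun e h₁ z₁) (gfun e h₂ z₂) := by
  obtain ⟨n, hn⟩ := hh
  refine ⟨2 * n + 1, fun m hm => ?_⟩
  obtain ⟨k, rfl | rfl⟩ := Nat.even_or_odd' m
  · rw [gfun_two_mul, gfun_two_mul]
    exact hn k (by omega)
  · rw [gfun_two_mul_add_one, gfun_two_mul_add_one]
    intro heq
    have hpair := sigma_mk_injective (he heq)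
    have hrestrict : (fun i : Fin (2 * k + 1) => h₁ i.1) = fun i => h₂ i.1 :=
      congrArg Prod.fst hpair
    exact hn n le_rfl (congrFun hrestrict ⟨n, by omega⟩)

theorem EDFam.image_gfun (he : Injective e) {E : Set (ℕ → ℕ)} (hE : EDFam E)
    (R : (ℕ → ℕ) → ℕ → ℕ) : EDFam ((fun h => gfun e h (R h)) '' E) := by
  rintro _ ⟨h₁, hh₁, rfl⟩ _ ⟨h₂, hh₂, rfl⟩ hne
  exact (hE h₁ hh₁ h₂ hh₂ fun h => hne (h ▸ rfl)).gfun he _ _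

theorem exists_image_gfun_not_evDiff {E : Set (ℕ → ℕ)} (hmax : ∀ f : ℕ → ℕ, ∃ g ∈ E, ¬ EvDiff f g)
    (R : (ℕ → ℕ) → ℕ → ℕ) (f : ℕ → ℕ) :
    ∃ g ∈ (fun h => gfun e h (R h)) '' E, ¬ EvDiff f g := by
  obtain ⟨h, hh, hfh⟩ := hmax (f ∘ (2 * ·))
  refine ⟨gfun e h (R h), ⟨h, hh, rfl⟩, fun hfg => hfh ?_⟩
  simpa only [gfun_comp_two_mul] using
    hfg.comp (strictMono_mul_left_of_pos (two_pos : (0 : ℕ) < 2)).tendsto_atTop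

end gfun

theorem stmt7 (e : (Σ n : ℕ, (Fin n → ℕ) × (Fin n → ℕ)) → ℕ)
    (he : Function.Bijective e)
    (E : Set (ℕ → ℕ)) (R : (ℕ → ℕ) → (ℕ → ℕ)) (hE : EDFam E) :
    EDFam ((fun h => gfun e h (R h)) '' E) ∧
      ((∀ f : ℕ → ℕ, ∃ g ∈ E, ¬ EvDiff f g) →
        ∀ f : ℕ → ℕ, ∃ g ∈ (fun h => gfun e h (R h)) '' E, ¬ EvDiff f g) :=
  ⟨hE.image_gfun he.injective R, fun hmax => exists_image_gfun_not_evDiff hmax R⟩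
end

section
/- Let F₀ ⊆ (ℕ → ℕ) be countable and let f* : (ℕ → (ℕ → {0,1})) → (ℕ → ℕ) be a continuous function on the countable power of Cantor space such that for every sequence x̄, f*(x̄) is eventually different from every function in F₀. Then there exist h : ℕ → ℕ and a sequence ⟨P_n : n ∈ ℕ⟩ of nonempty perfect subsets of Cantor space such that h is eventually different from every member of F₀, yet for every x̄ with x̄(n) ∈ P_n for all n, h is not eventually different from f*(x̄). -/
open Classical

namespace S11

abbrev Pt := ℕ → ℕ → Bool

/-- modulus of continuity for a continuous `f : Pt → ℕ → ℕ` -/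
lemma modulus {f : Pt → ℕ → ℕ} (hf : Continuous f) (x : Pt) (b : ℕ) :
    ∃ K : ℕ, ∀ y : Pt, (∀ n < K, ∀ i < K, y n i = x n i) → ∀ m < b, f y m = f x m := by
  have hg : Continuous (fun y : Pt => (fun m : Fin b => f y m)) := by
    exact continuous_pi fun m => (continuous_apply (m : ℕ)).comp hf
  have hU : IsOpen ((fun y : Pt => (fun m : Fin b => f y m)) ⁻¹' {fun m : Fin b => f x m}) :=
    (isOpen_discrete _).preimage hg
  rw [isOpen_pi_iff] at hU
  obtain ⟨I, u, hu, hsub⟩ := hU x rfl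
  have h1 : ∀ n : ℕ, ∃ J : Finset ℕ, n ∈ I → ∀ z : ℕ → Bool,
      (∀ i ∈ J, z i = x n i) → z ∈ u n := by
    intro n
    by_cases hn : n ∈ I
    · have := (hu n hn).1
      rw [isOpen_pi_iff] at this
      obtain ⟨J, v, hv, hsub'⟩ := this (x n) (hu n hn).2
      refine ⟨J, fun _ z hz => hsub' ?_⟩
      intro i hi
      rw [hz i hi]
      exact (hv i hi).2
    · exact ⟨∅, fun h => absurd h hn⟩
  choose J hJ using h1
  refine ⟨(I.sup fun n => n + 1) ⊔ (I.sup fun n => (J n).sup fun i => i + 1), fun y hy m hm => ?_⟩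
  have hyU : y ∈ (fun y : Pt => (fun m : Fin b => f y m)) ⁻¹' {fun m : Fin b => f x m} := by
    apply hsub
    intro n hn
    apply hJ n hn
    intro i hi
    apply hy
    · exact lt_of_lt_of_le (Nat.lt_succ_self n) (le_sup_of_le_left (Finset.le_sup hn))
    · refine lt_of_lt_of_le (Nat.lt_succ_self i) (le_sup_of_le_right ?_)
      exact le_trans (Finset.le_sup (f := fun i => i + 1) hi)
        (Finset.le_sup (f := fun n => (J n).sup fun i => i + 1) hn)
  have := congrFun (Set.mem_singleton_iff.mp hyU) ⟨m, hm⟩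
  simpa using this

/-- all assignments of the bits in `Q` -/
noncomputable def asg : List (ℕ × ℕ) → List Pt
  | [] => [fun _ _ => false]
  | q :: Q => (asg Q).flatMap fun c =>
      [fun n i => if n = q.1 ∧ i = q.2 then false else c n i,
       fun n i => if n = q.1 ∧ i = q.2 then true else c n i]

lemma asg_complete (Q : List (ℕ × ℕ)) (y : Pt) :
    ∃ c ∈ asg Q, ∀ q ∈ Q, c q.1 q.2 = y q.1 q.2 := by
  induction Q with
  | nil => exact ⟨_, List.mem_singleton.mpr rfl, by simp⟩
  | cons q Q ih =>
    obtain ⟨c, hc, hcq⟩ := ih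
    refine ⟨fun n i => if n = q.1 ∧ i = q.2 then y q.1 q.2 else c n i, ?_, ?_⟩
    · rw [asg, List.mem_flatMap]
      refine ⟨c, hc, ?_⟩
      cases hb : y q.1 q.2 <;> simp [hb]
    · intro q' hq'
      rcases List.mem_cons.mp hq' with h | h
      · subst h; simp
      · by_cases he : q'.1 = q.1 ∧ q'.2 = q.2
        · simp [he.1, he.2]
        · simp only [he, if_false]
          exact hcq q' h

def tri (k : ℕ) : List (ℕ × ℕ) :=
  (List.range k).flatMap fun n => (List.range (k - n)).map fun i => (n, i)

lemma mem_tri {k n i : ℕ} : (n, i) ∈ tri k ↔ n < k ∧ i < k - n := by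
  simp only [tri, List.mem_flatMap, List.mem_map, List.mem_range, Prod.mk.injEq]
  constructor
  · rintro ⟨a, ha, b, hb, rfl, rfl⟩
    exact ⟨ha, hb⟩
  · rintro ⟨h1, h2⟩
    exact ⟨n, h1, i, h2, rfl, rfl⟩


/-- `S n b` : current stem of the branch determined by the first `k-n` bits of `b`,
in the tree being built for coordinate `n`. -/
def Dep (k : ℕ) (S : ℕ → (ℕ → Bool) → List Bool) : Prop :=
  ∀ n b b', (∀ i, i < k - n → b i = b' i) → S n b = S n b'

def Sat (L : ℕ → List Bool) (x : Pt) : Prop :=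
  ∀ n i, i < (L n).length → x n i = (L n).getD i false

def Ext (S S' : ℕ → (ℕ → Bool) → List Bool) : Prop := ∀ n b, S n b <+: S' n b

noncomputable def pad (L : ℕ → List Bool) : Pt := fun n i => (L n).getD i false

lemma Sat.mono {L L' : ℕ → List Bool} {x : Pt} (hL : ∀ n, L n <+: L' n)
    (h : Sat L' x) : Sat L x := by
  intro n i hi
  have hlen : i < (L' n).length := lt_of_lt_of_le hi (hL n).length_le
  rw [h n i hlen]
  rw [List.getD_eq_getElem _ _ hi, List.getD_eq_getElem _ _ hlen]
  exact ((hL n).getElem hi).symm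

section Step

variable {f : Pt → ℕ → ℕ} {D : ℕ → ℕ → ℕ}

/-- one forcing step, for a single "combo" `c`. -/
lemma step (hf : Continuous f) (ht : ∀ j x, ∃ t, ∀ m, t ≤ m → f x m ≠ D j m)
    (k : ℕ) (c : Pt) (S : ℕ → (ℕ → Bool) → List Bool) (hS : Dep k S)
    (p : ℕ) (h : ℕ → ℕ) :
    ∃ (S' : ℕ → (ℕ → Bool) → List Bool) (p' : ℕ) (h' : ℕ → ℕ),
      Dep k S' ∧ Ext S S' ∧ p ≤ p' ∧ (∀ m, m < p → h' m = h m) ∧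
      (∀ m, p ≤ m → m < p' → ∀ j ≤ k, h' m ≠ D j m) ∧
      (∃ m, p ≤ m ∧ m < p' ∧ ∀ x, Sat (fun n => S' n (c n)) x → f x m = h' m) := by
  classical
  set σ : ℕ → List Bool := fun n => S n (c n) with hσ
  set x₀ : Pt := pad σ with hx₀
  set m₀ : ℕ := max p ((Finset.range (k+1)).sup fun j => choose (ht j x₀)) with hm₀
  set K : ℕ := choose (modulus hf x₀ (m₀+1)) with hK
  have hKspec := choose_spec (modulus hf x₀ (m₀+1))
  refine ⟨fun n b => if ∀ i, i < k - n → b i = c n i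
      then σ n ++ List.replicate (K - (σ n).length) false else S n b,
    m₀ + 1,
    fun m => if m = m₀ then f x₀ m₀ else
      if p ≤ m ∧ m < m₀ then 1 + ((Finset.range (k+1)).sup fun j => D j m) else h m,
    ?_, ?_, ?_, ?_, ?_, ?_⟩
  · -- Dep
    intro n b b' hbb
    show (if ∀ i, i < k - n → b i = c n i
        then σ n ++ List.replicate (K - (σ n).length) false else S n b)
      = (if ∀ i, i < k - n → b' i = c n i
        then σ n ++ List.replicate (K - (σ n).length) false else S n b')
    by_cases hb : ∀ i, i < k - n → b i = c n i
    · have hb' : ∀ i, i < k - n → b' i = c n i := fun i hi => (hbb i hi).symm.trans (hb i hi)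
      rw [if_pos hb, if_pos hb']
    · have hb' : ¬ ∀ i, i < k - n → b' i = c n i := by
        intro hcon; exact hb fun i hi => (hbb i hi).trans (hcon i hi)
      simp only [hb, hb', if_false]
      exact hS n b b' hbb
  · -- Ext
    intro n b
    show S n b <+: if ∀ i, i < k - n → b i = c n i
      then σ n ++ List.replicate (K - (σ n).length) false else S n b
    by_cases hb : ∀ i, i < k - n → b i = c n i
    · rw [if_pos hb, hS n b (c n) hb]
      exact ⟨_, rfl⟩
    · rw [if_neg hb]
  · exact le_trans (le_max_left _ _) (Nat.le_succ _)
  · intro m hm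
    have h1 : m ≠ m₀ := Nat.ne_of_lt (lt_of_lt_of_le hm (le_max_left _ _))
    have h2 : ¬ (p ≤ m ∧ m < m₀) := fun hcon => absurd hcon.1 (not_le.mpr hm)
    simp [h1, h2]
  · -- block property
    intro m hpm hm' j hj
    show (if m = m₀ then f x₀ m₀ else
      if p ≤ m ∧ m < m₀ then 1 + ((Finset.range (k+1)).sup fun j => D j m) else h m) ≠ D j m
    by_cases h1 : m = m₀
    · subst h1
      simp only [if_pos rfl]
      have := choose_spec (ht j x₀)
      apply this
      exact le_max_of_le_right (Finset.le_sup (f := fun j => choose (ht j x₀))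
        (Finset.mem_range.mpr (Nat.lt_succ_of_le hj)))
    · have hmlt : m < m₀ := lt_of_le_of_ne (Nat.lt_succ_iff.mp hm') h1
      rw [if_neg h1, if_pos ⟨hpm, hmlt⟩]
      have : D j m ≤ (Finset.range (k+1)).sup fun j => D j m :=
        Finset.le_sup (f := fun j => D j m) (Finset.mem_range.mpr (Nat.lt_succ_of_le hj))
      omega
  · -- guarantee
    refine ⟨m₀, le_max_left _ _, Nat.lt_succ_self _, fun x hx => ?_⟩
    have hcc : ∀ i, i < k - 0 → True := fun _ _ => trivial
    have hxagree : ∀ n < K, ∀ i < K, x n i = x₀ n i := by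
      intro n _ i hiK
      have hcond : (∀ i, i < k - n → c n i = c n i) := fun _ _ => rfl
      have hlist : (fun n => if ∀ i, i < k - n → c n i = c n i
          then σ n ++ List.replicate (K - (σ n).length) false else S n (c n)) n
          = σ n ++ List.replicate (K - (σ n).length) false := by simp [hcond]
      have hlen : i < (σ n ++ List.replicate (K - (σ n).length) false).length := by
        rw [List.length_append, List.length_replicate]
        omega
      have := hx n i (by rw [hlist] at *; exact hlen)
      rw [hlist] at this  -- adjust
      rw [this, hx₀, pad]
      by_cases hiσ : i < (σ n).length
      · rw [List.getD_eq_getElem _ _ hlen, List.getD_eq_getElem _ _ hiσ,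
          List.getElem_append_left hiσ]
      · rw [List.getD_eq_default _ _ (le_of_not_gt hiσ)]
        rw [List.getD_eq_getElem _ _ hlen]
        rw [List.getElem_append_right (le_of_not_gt hiσ)]
        simp
    have := hKspec x hxagree m₀ (Nat.lt_succ_self _)
    simp only [if_pos rfl]
    exact this

/-- iterate `step` over a list of combos -/
lemma fold (hf : Continuous f) (ht : ∀ j x, ∃ t, ∀ m, t ≤ m → f x m ≠ D j m)
    (k : ℕ) (cs : List Pt) (S : ℕ → (ℕ → Bool) → List Bool) (hS : Dep k S)
    (p : ℕ) (h : ℕ → ℕ) :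
    ∃ (S' : ℕ → (ℕ → Bool) → List Bool) (p' : ℕ) (h' : ℕ → ℕ),
      Dep k S' ∧ Ext S S' ∧ p ≤ p' ∧ (∀ m, m < p → h' m = h m) ∧
      (∀ m, p ≤ m → m < p' → ∀ j ≤ k, h' m ≠ D j m) ∧
      (∀ c ∈ cs, ∃ m, p ≤ m ∧ m < p' ∧ ∀ x, Sat (fun n => S' n (c n)) x → f x m = h' m) := by
  induction cs generalizing S p h with
  | nil =>
    exact ⟨S, p, h, hS, fun n b => List.prefix_refl _, le_refl _, fun _ _ => rfl,
      fun m h1 h2 => absurd (lt_of_le_of_lt h1 h2) (lt_irrefl _), fun c hc => absurd hc (by simp)⟩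
  | cons c cs ih =>
    obtain ⟨S₁, p₁, h₁, hS₁, hext₁, hp₁, hlow₁, hblock₁, m₁, hm₁p, hm₁p', hguar₁⟩ :=
      step hf ht k c S hS p h
    obtain ⟨S', p', h', hS', hext', hp', hlow', hblock', hguar'⟩ := ih S₁ hS₁ p₁ h₁
    refine ⟨S', p', h', hS', fun n b => (hext₁ n b).trans (hext' n b), le_trans hp₁ hp',
      fun m hm => (hlow' m (lt_of_lt_of_le hm hp₁)).trans (hlow₁ m hm), ?_, ?_⟩
    · intro m hpm hm' j hj
      by_cases h1 : m < p₁
      · rw [hlow' m h1]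
        exact hblock₁ m hpm h1 j hj
      · exact hblock' m (le_of_not_gt h1) hm' j hj
    · intro c' hc'
      rcases List.mem_cons.mp hc' with rfl | hmem
      · refine ⟨m₁, hm₁p, lt_of_lt_of_le hm₁p' hp', fun x hx => ?_⟩
        rw [hlow' m₁ hm₁p']
        exact hguar₁ x (hx.mono fun n => hext' n (c' n))
      · obtain ⟨m, hm1, hm2, hg⟩ := hguar' c' hmem
        exact ⟨m, le_trans hp₁ hm1, hm2, hg⟩

/-- data for one full stage: process all combos, then append one splitting bit. -/
def StageRel (f : Pt → ℕ → ℕ) (D : ℕ → ℕ → ℕ) (k : ℕ)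
    (S : ℕ → (ℕ → Bool) → List Bool) (p : ℕ) (h : ℕ → ℕ)
    (S' : ℕ → (ℕ → Bool) → List Bool) (p' : ℕ) (h' : ℕ → ℕ) : Prop :=
  Dep (k+1) S' ∧ Ext S S' ∧ p ≤ p' ∧ (∀ m, m < p → h' m = h m) ∧
  (∀ m, p ≤ m → m < p' → ∀ j ≤ k, h' m ≠ D j m) ∧
  (∀ n b, n ≤ k → (S n b).length < (S' n b).length) ∧
  (∀ n b b', n ≤ k → (∀ i, i < k - n → b i = b' i) →
     ∃ L, S' n b = L ++ [b (k-n)] ∧ S' n b' = L ++ [b' (k-n)]) ∧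
  (∀ y : Pt, ∃ m, p ≤ m ∧ m < p' ∧ ∀ x, Sat (fun n => S' n (y n)) x → f x m = h' m)

lemma stage (hf : Continuous f) (ht : ∀ j x, ∃ t, ∀ m, t ≤ m → f x m ≠ D j m)
    (k : ℕ) (S : ℕ → (ℕ → Bool) → List Bool) (hS : Dep k S) (p : ℕ) (h : ℕ → ℕ) :
    ∃ S' p' h', StageRel f D k S p h S' p' h' := by
  obtain ⟨S₁, p₁, h₁, hS₁, hext₁, hp₁, hlow₁, hblock₁, hguar₁⟩ :=
    fold hf ht k (asg (tri k)) S hS p h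
  refine ⟨fun n b => S₁ n b ++ (if n ≤ k then [b (k-n)] else []), p₁, h₁,
    ?_, ?_, hp₁, hlow₁, hblock₁, ?_, ?_, ?_⟩
  · -- Dep (k+1)
    intro n b b' hbb
    show S₁ n b ++ (if n ≤ k then [b (k-n)] else [])
      = S₁ n b' ++ (if n ≤ k then [b' (k-n)] else [])
    have h1 : S₁ n b = S₁ n b' := hS₁ n b b' fun i hi => hbb i (by omega)
    rw [h1]
    by_cases hn : n ≤ k
    · rw [if_pos hn, if_pos hn, hbb (k - n) (by omega)]
    · rw [if_neg hn, if_neg hn]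
  · -- Ext
    intro n b
    exact (hext₁ n b).trans ⟨_, rfl⟩
  · -- length growth
    intro n b hn
    rw [List.length_append, if_pos hn]
    have := (hext₁ n b).length_le
    simp only [List.length_singleton]
    omega
  · -- split structure
    intro n b b' hn hbb
    have h1 : S₁ n b = S₁ n b' := hS₁ n b b' hbb
    refine ⟨S₁ n b, ?_, ?_⟩
    · show S₁ n b ++ (if n ≤ k then [b (k-n)] else []) = _
      rw [if_pos hn]
    · show S₁ n b' ++ (if n ≤ k then [b' (k-n)] else []) = _
      rw [if_pos hn, h1]
  · -- guarantee for every y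
    intro y
    obtain ⟨c, hc, hcy⟩ := asg_complete (tri k) (fun n i => y n i)
    obtain ⟨m, hm1, hm2, hg⟩ := hguar₁ c hc
    refine ⟨m, hm1, hm2, fun x hx => ?_⟩
    apply hg
    have hcS : ∀ n, S₁ n (c n) = S₁ n (y n) := by
      intro n
      apply hS₁
      intro i hi
      exact hcy (n, i) (mem_tri.mpr ⟨by omega, hi⟩)
    refine Sat.mono (fun n => ?_) hx
    rw [hcS n]
    exact ⟨_, rfl⟩

section Chain

variable (hf : Continuous f) (ht : ∀ j x, ∃ t, ∀ m, t ≤ m → f x m ≠ D j m)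

noncomputable def chain : (k : ℕ) → {σ : (ℕ → (ℕ → Bool) → List Bool) × ℕ × (ℕ → ℕ) // Dep k σ.1}
  | 0 => ⟨⟨fun _ _ => [], 0, fun _ => 0⟩, fun _ _ _ _ => rfl⟩
  | k+1 =>
    let prev := chain k
    let e := stage hf ht k prev.1.1 prev.2 prev.1.2.1 prev.1.2.2
    ⟨⟨choose e, choose (choose_spec e), choose (choose_spec (choose_spec e))⟩,
      (choose_spec (choose_spec (choose_spec e))).1⟩

noncomputable def Ssq (k : ℕ) : ℕ → (ℕ → Bool) → List Bool := (chain hf ht k).1.1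
noncomputable def Np (k : ℕ) : ℕ := (chain hf ht k).1.2.1
noncomputable def hseq (k : ℕ) : ℕ → ℕ := (chain hf ht k).1.2.2

lemma chain_rel (k : ℕ) : StageRel f D k (Ssq hf ht k) (Np hf ht k) (hseq hf ht k)
    (Ssq hf ht (k+1)) (Np hf ht (k+1)) (hseq hf ht (k+1)) := by
  have h := choose_spec (choose_spec (choose_spec
    (stage hf ht k (chain hf ht k).1.1 (chain hf ht k).2 (chain hf ht k).1.2.1
      (chain hf ht k).1.2.2)))
  exact h

lemma Np_zero : Np hf ht 0 = 0 := rfl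

lemma Np_lt (k : ℕ) : Np hf ht k < Np hf ht (k+1) := by
  obtain ⟨m, h1, h2, _⟩ := (chain_rel hf ht k).2.2.2.2.2.2.2 (fun _ _ => false)
  omega

lemma Np_mono {k K : ℕ} (h : k ≤ K) : Np hf ht k ≤ Np hf ht K := by
  induction K with
  | zero =>
    have : k = 0 := by omega
    subst this; exact le_refl _
  | succ K ih =>
    rcases Nat.lt_succ_iff_lt_or_eq.mp (Nat.lt_succ_of_le h) with h' | rfl
    · exact le_trans (ih (by omega)) (le_of_lt (Np_lt hf ht K))
    · rfl

lemma le_Np (k : ℕ) : k ≤ Np hf ht k := by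
  induction k with
  | zero => exact le_refl _
  | succ k ih => exact lt_of_le_of_lt ih (Np_lt hf ht k)

lemma hseq_stable {k K : ℕ} (h : k ≤ K) : ∀ m, m < Np hf ht k → hseq hf ht K m = hseq hf ht k m := by
  induction K with
  | zero =>
    intro m hm
    have : k = 0 := by omega
    subst this; rfl
  | succ K ih =>
    intro m hm
    rcases Nat.lt_succ_iff_lt_or_eq.mp (Nat.lt_succ_of_le h) with h' | rfl
    · have h1 := (chain_rel hf ht K).2.2.2.1 m (lt_of_lt_of_le hm (Np_mono hf ht (by omega : k ≤ K)))
      rw [h1]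
      exact ih (by omega) m hm
    · rfl

lemma Ssq_prefix {k K : ℕ} (h : k ≤ K) (n : ℕ) (b : ℕ → Bool) :
    Ssq hf ht k n b <+: Ssq hf ht K n b := by
  induction K with
  | zero =>
    have : k = 0 := by omega
    subst this; exact List.prefix_refl _
  | succ K ih =>
    rcases Nat.lt_succ_iff_lt_or_eq.mp (Nat.lt_succ_of_le h) with h' | rfl
    · exact (ih (by omega)).trans ((chain_rel hf ht K).2.1 n b)
    · exact List.prefix_refl _

lemma Ssq_len (k n : ℕ) (b : ℕ → Bool) : k - n ≤ (Ssq hf ht k n b).length := by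
  induction k with
  | zero => omega
  | succ k ih =>
    by_cases hn : n ≤ k
    · have := (chain_rel hf ht k).2.2.2.2.2.1 n b hn
      omega
    · omega

lemma Ssq_dep (k : ℕ) : Dep k (Ssq hf ht k) := (chain hf ht k).2

/-- the final `h` -/
noncomputable def hh : ℕ → ℕ := fun m => hseq hf ht (m+1) m

lemma hh_eq {k m : ℕ} (h : m < Np hf ht k) : hh hf ht m = hseq hf ht k m := by
  unfold hh
  rcases le_total k (m+1) with h' | h'
  · exact hseq_stable hf ht h' m h
  · exact (hseq_stable hf ht h' m (lt_of_lt_of_le (Nat.lt_succ_self m) (le_Np hf ht (m+1)))).symm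

/-- the embeddings -/
noncomputable def ee (n : ℕ) (z : ℕ → Bool) : ℕ → Bool :=
  fun i => (Ssq hf ht (n+i+1) n z).getD i false

lemma prefix_getD {L M : List Bool} (h : L <+: M) {i : ℕ} (hi : i < L.length) :
    L.getD i false = M.getD i false := by
  rw [List.getD_eq_getElem _ _ hi, List.getD_eq_getElem _ _ (lt_of_lt_of_le hi h.length_le)]
  exact h.getElem hi

lemma ee_eq {k n : ℕ} {z : ℕ → Bool} {i : ℕ} (hi : i < (Ssq hf ht k n z).length) :
    ee hf ht n z i = (Ssq hf ht k n z).getD i false := by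
  unfold ee
  have hlen : i < (Ssq hf ht (n+i+1) n z).length :=
    lt_of_lt_of_le (by omega) (Ssq_len hf ht (n+i+1) n z)
  rcases le_total k (n+i+1) with h' | h'
  · exact (prefix_getD (Ssq_prefix hf ht h' n z) hi).symm
  · exact prefix_getD (Ssq_prefix hf ht h' n z) hlen

lemma Sat_ee (y : Pt) (k : ℕ) :
    Sat (fun n => Ssq hf ht k n (y n)) (fun n => ee hf ht n (y n)) := by
  intro n i hi
  exact ee_eq hf ht hi

lemma continuous_of_depends (J : ℕ) (F : (ℕ → Bool) → Bool)
    (hF : ∀ z z', (∀ j, j < J → z j = z' j) → F z = F z') : Continuous F := by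
  have hcomp : F = (fun g : Fin J → Bool => F (fun j => if h : j < J then g ⟨j, h⟩ else false)) ∘
      (fun z (j : Fin J) => z j) := by
    funext z
    exact hF _ _ (fun j hj => by simp [hj])
  rw [hcomp]
  exact continuous_of_discreteTopology.comp (continuous_pi fun j => continuous_apply _)

lemma ee_cont (n : ℕ) : Continuous (ee hf ht n) := by
  apply continuous_pi
  intro i
  apply continuous_of_depends (i+1)
  intro z z' hzz
  show (Ssq hf ht (n+i+1) n z).getD i false = (Ssq hf ht (n+i+1) n z').getD i false
  rw [Ssq_dep hf ht (n+i+1) n z z' (fun j hj => hzz j (by omega))]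

lemma ee_inj (n : ℕ) : Function.Injective (ee hf ht n) := by
  intro z z' hzz
  by_contra hne
  have hex : ∃ i, z i ≠ z' i := by
    by_contra hcon; push_neg at hcon; exact hne (funext hcon)
  have hi : z (Nat.find hex) ≠ z' (Nat.find hex) := Nat.find_spec hex
  set i := Nat.find hex with hidef
  have hmin : ∀ j, j < i → z j = z' j := fun j hj => not_not.mp (Nat.find_min hex hj)
  obtain ⟨L, hL, hL'⟩ := (chain_rel hf ht (n+i)).2.2.2.2.2.2.1 n z z'
    (by omega) (fun j hj => hmin j (by omega))
  have hsub : n + i - n = i := by omega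
  rw [hsub] at hL hL'
  have hlen : L.length < (Ssq hf ht (n+i+1) n z).length := by rw [hL]; simp
  have hlen' : L.length < (Ssq hf ht (n+i+1) n z').length := by rw [hL']; simp
  have h1 : ee hf ht n z L.length = z i := by
    rw [ee_eq hf ht hlen, hL, List.getD_eq_getElem _ _ (by simp)]
    simp
  have h2 : ee hf ht n z' L.length = z' i := by
    rw [ee_eq hf ht hlen', hL', List.getD_eq_getElem _ _ (by simp)]
    simp
  rw [hzz] at h1
  exact hi (h1.symm.trans h2)

lemma ee_perfect (n : ℕ) : Perfect (Set.range (ee hf ht n)) := by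
  constructor
  · exact (isCompact_range (ee_cont hf ht n)).isClosed
  · rintro w ⟨z, rfl⟩
    rw [accPt_iff_nhds]
    intro U hU
    have htz : Filter.Tendsto (fun j : ℕ => Function.update z j (!(z j))) Filter.atTop (nhds z) := by
      rw [tendsto_pi_nhds]
      intro i
      apply Filter.Tendsto.congr' _ tendsto_const_nhds
      filter_upwards [Filter.eventually_gt_atTop i] with j hj
      exact (Function.update_of_ne (by omega) _ z).symm
    have hte : Filter.Tendsto (fun j : ℕ => ee hf ht n (Function.update z j (!(z j))))
        Filter.atTop (nhds (ee hf ht n z)) := ((ee_cont hf ht n).continuousAt).tendsto.comp htz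
    obtain ⟨j, hj⟩ := (hte.eventually_mem hU).exists
    refine ⟨ee hf ht n (Function.update z j (!(z j))), ⟨hj, ⟨_, rfl⟩⟩, ?_⟩
    intro heq
    have h5 := congrFun (ee_inj hf ht n heq) j
    rw [Function.update_self] at h5
    exact Bool.not_ne_self (z j) h5

lemma hh_evdiff (j : ℕ) : ∀ m, Np hf ht j ≤ m → hh hf ht m ≠ D j m := by
  intro m hm
  have hex : ∃ k, m < Np hf ht (k+1) :=
    ⟨m, lt_of_lt_of_le (Nat.lt_succ_self m) (le_Np hf ht (m+1))⟩
  set k₀ := Nat.find hex with hk₀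
  have hk2 : m < Np hf ht (k₀+1) := Nat.find_spec hex
  have hk1 : Np hf ht k₀ ≤ m := by
    by_cases h0 : k₀ = 0
    · rw [h0, Np_zero]; omega
    · have h8 := Nat.find_min hex (Nat.pred_lt h0)
      have h9 : (Nat.find hex).pred + 1 = k₀ := Nat.succ_pred_eq_of_ne_zero h0
      rw [h9] at h8
      exact le_of_not_gt h8
  have hjk : j ≤ k₀ := by
    by_contra hcon
    have h6 : Np hf ht (k₀ + 1) ≤ Np hf ht j := Np_mono hf ht (by omega)
    have h7 : Np hf ht j ≤ m := hm
    exact absurd (lt_of_lt_of_le hk2 (le_trans h6 h7)) (lt_irrefl m)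
  rw [hh_eq hf ht hk2]
  exact (chain_rel hf ht k₀).2.2.2.2.1 m hk1 hk2 j hjk

lemma hh_agree (y : Pt) (N : ℕ) :
    ∃ m, N ≤ m ∧ f (fun n => ee hf ht n (y n)) m = hh hf ht m := by
  obtain ⟨m, hm1, hm2, hg⟩ := (chain_rel hf ht N).2.2.2.2.2.2.2 y
  refine ⟨m, le_trans (le_Np hf ht N) hm1, ?_⟩
  rw [hh_eq hf ht hm2]
  exact hg _ (Sat_ee hf ht y (N+1))

end Chain

end Step

end S11

theorem stmt11 (F₀ : Set (ℕ → ℕ)) (hc : F₀.Countable)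
    (f : (ℕ → (ℕ → Bool)) → (ℕ → ℕ)) (hf : Continuous f)
    (hed : ∀ x : ℕ → (ℕ → Bool), ∀ g ∈ F₀, EvDiff (f x) g) :
    ∃ (h : ℕ → ℕ) (P : ℕ → Set (ℕ → Bool)),
      (∀ n, (P n).Nonempty ∧ Perfect (P n)) ∧
      (∀ g ∈ F₀, EvDiff h g) ∧
      ∀ x : ℕ → (ℕ → Bool), (∀ n, x n ∈ P n) → ¬ EvDiff h (f x) := by
  classical
  obtain ⟨D, ht, hcov⟩ : ∃ D : ℕ → ℕ → ℕ,
      (∀ j x, ∃ t, ∀ m, t ≤ m → f x m ≠ D j m) ∧ F₀ ⊆ Set.range D := by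
    rcases F₀.eq_empty_or_nonempty with hF | hF
    · refine ⟨fun _ m => sSup (Set.range fun x : S11.Pt => f x m) + 1, ?_, by simp [hF]⟩
      intro j x
      refine ⟨0, fun m _ => ?_⟩
      have hbdd : BddAbove (Set.range fun x : S11.Pt => f x m) :=
        (isCompact_range ((continuous_apply m).comp hf)).bddAbove
      have := le_csSup hbdd (Set.mem_range_self (f := fun x : S11.Pt => f x m) x)
      show f x m ≠ sSup (Set.range fun x : S11.Pt => f x m) + 1
      omega
    · obtain ⟨D, hD⟩ := Set.Countable.exists_eq_range hc hF
      refine ⟨D, ?_, hD.le.trans (le_refl _)⟩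
      intro j x
      have : D j ∈ F₀ := hD ▸ Set.mem_range_self j
      exact hed x (D j) this
  refine ⟨S11.hh hf ht, fun n => Set.range (S11.ee hf ht n), ?_, ?_, ?_⟩
  · intro n
    exact ⟨⟨_, Set.mem_range_self (fun _ => false)⟩, S11.ee_perfect hf ht n⟩
  · intro g hg
    obtain ⟨j, rfl⟩ := hcov hg
    exact ⟨S11.Np hf ht j, S11.hh_evdiff hf ht j⟩
  · intro x hx
    have hy : ∀ n, ∃ z, S11.ee hf ht n z = x n := fun n => hx n
    choose y hyx using hy
    have hxy : x = fun n => S11.ee hf ht n (y n) := by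
      funext n; exact (hyx n).symm
    rintro ⟨N, hN⟩
    obtain ⟨m, hm1, hm2⟩ := S11.hh_agree hf ht y N
    rw [← hxy] at hm2
    exact hN m hm1 hm2.symm
end

section
/- Let p be a perfect subtree of the full binary tree and let f : p → (finite sequences in ℕ) be monotone and proper on p, inducing a continuous f* : [p] → (ℕ → ℕ) on the branches of p. Then there exist h : ℕ → ℕ and a perfect subtree q ⊆ p such that for every branch x ∈ [q], h is not eventually different from f*(x). -/
def bres (x : ℕ → Bool) (n : ℕ) : List Bool := List.ofFn fun i : Fin n => x i.1

/-- A perfect subtree of the full binary tree: nonempty, closed under initial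
segments, and every node has two incomparable extensions in the tree. -/
def PerfectTree (p : Set (List Bool)) : Prop :=
  p.Nonempty ∧ (∀ s ∈ p, ∀ t : List Bool, t <+: s → t ∈ p) ∧
    ∀ s ∈ p, ∃ t₁ ∈ p, ∃ t₂ ∈ p, s <+: t₁ ∧ s <+: t₂ ∧ ¬ t₁ <+: t₂ ∧ ¬ t₂ <+: t₁

/-- The set of branches of a tree. -/
def branches (p : Set (List Bool)) : Set (ℕ → Bool) := {x | ∀ n, bres x n ∈ p}

lemma bres_length (x : ℕ → Bool) (n : ℕ) : (bres x n).length = n := by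
  simp [bres]

lemma bres_mono (x : ℕ → Bool) {m n : ℕ} (h : m ≤ n) : bres x m <+: bres x n := by
  have : bres x m = (bres x n).take m := by
    apply List.ext_getElem
    · simp [bres_length, h]
    · intro i h1 h2
      rw [List.getElem_take]
      simp [bres, List.getElem_ofFn]
  rw [this]; exact List.take_prefix _ _

lemma eq_bres_of_prefix_bres {s : List Bool} {x : ℕ → Bool} {n : ℕ}
    (h : s <+: bres x n) : bres x s.length = s := by
  have hl : s.length ≤ n := by have := h.length_le; rwa [bres_length] at this
  have h2 : bres x s.length <+: bres x n := bres_mono x hl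
  have h3 : bres x s.length <+: s :=
    List.prefix_of_prefix_length_le h2 h (by rw [bres_length])
  exact h3.eq_of_length (by rw [bres_length])

lemma incomp_lift {u₁ u₂ t₁ t₂ : List Bool} (h1 : u₁ <+: t₁) (h2 : u₂ <+: t₂)
    (h : ¬ u₁ <+: u₂) (h' : ¬ u₂ <+: u₁) : ¬ t₁ <+: t₂ := by
  intro ht
  have a : u₁ <+: t₂ := h1.trans ht
  rcases le_total u₁.length u₂.length with hl | hl
  · exact h (List.prefix_of_prefix_length_le a h2 hl)
  · exact h' (List.prefix_of_prefix_length_le h2 a hl)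

lemma cons_suffix_of_proper {l₁ l₂ : List Bool} (h : l₁ <:+ l₂) (hne : l₁ ≠ l₂) :
    ∃ c, (c :: l₁) <:+ l₂ := by
  obtain ⟨d, hd⟩ := h
  rcases List.eq_nil_or_concat d with rfl | ⟨d', c, rfl⟩
  · simp at hd; exact absurd hd hne
  · exact ⟨c, d', by rw [← hd]; simp⟩

lemma inj_unbounded (f : ℕ → ℕ) (hf : Function.Injective f) (n : ℕ) : ∃ k, n ≤ f k := by
  by_contra hc
  push_neg at hc
  have := Finset.card_le_card_of_injOn f
    (s := Finset.range (n+1)) (t := Finset.range n)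
    (fun a _ => Finset.mem_range.mpr (hc a)) (hf.injOn)
  simp at this

lemma branch_thru {p : Set (List Bool)} (hp : PerfectTree p) :
    ∀ s ∈ p, ∃ x ∈ branches p, bres x s.length = s := by
  obtain ⟨-, hclosed, hsplit⟩ := hp
  have hext : ∀ s ∈ p, ∃ t, t ∈ p ∧ s <+: t ∧ s.length < t.length := by
    intro s hs
    obtain ⟨t₁, ht₁, t₂, ht₂, h1, h2, h3, h4⟩ := hsplit s hs
    refine ⟨t₁, ht₁, h1, lt_of_le_of_ne h1.length_le ?_⟩
    intro hlen
    have : s = t₁ := h1.eq_of_length hlen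
    exact h3 (this ▸ h2)
  intro s hs
  choose e he1 he2 he3 using hext
  let gs : ℕ → {t : List Bool // t ∈ p} := fun n =>
    Nat.rec ⟨s, hs⟩ (fun _ ih => ⟨e ih.1 ih.2, he1 ih.1 ih.2⟩) n
  have hchain1 : ∀ n, (gs n).1 <+: (gs (n+1)).1 := fun n => he2 _ _
  have hlen1 : ∀ n, (gs n).1.length < (gs (n+1)).1.length := fun n => he3 _ _
  have hchain : ∀ m n, m ≤ n → (gs m).1 <+: (gs n).1 := by
    intro m n h
    induction n with
    | zero => cases Nat.le_zero.mp h; exact List.prefix_refl _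
    | succ k ih =>
      rcases Nat.le_succ_iff.mp h with h' | rfl
      · exact (ih h').trans (hchain1 k)
      · exact List.prefix_refl _
  have hlen : ∀ n, n ≤ (gs n).1.length := by
    intro n
    induction n with
    | zero => exact Nat.zero_le _
    | succ k ih => exact Nat.lt_of_le_of_lt ih (hlen1 k)
  set x : ℕ → Bool := fun i => (gs (i+1)).1.getD i false with hxdef
  have hkey : ∀ n, bres x n <+: (gs n).1 := by
    intro n
    have : bres x n = (gs n).1.take n := by
      apply List.ext_getElem
      · simp [bres_length, Nat.min_eq_left (hlen n)]
      · intro i h1 h2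
        rw [List.getElem_take]
        have hi1 : i < (gs (i+1)).1.length := Nat.lt_of_lt_of_le (Nat.lt_succ_self i) (hlen (i+1))
        have hin : i < n := by simpa [bres_length] using h1
        have hx : x i = (gs (i+1)).1[i] := List.getD_eq_getElem _ _ hi1
        simp only [bres, List.getElem_ofFn]
        rw [hx]
        exact (hchain (i+1) n hin).getElem hi1
    rw [this]; exact List.take_prefix _ _
  refine ⟨x, fun n => hclosed _ (gs n).2 _ (hkey n), ?_⟩
  have h1 : bres x s.length <+: (gs s.length).1 := hkey s.length
  have h2 : s <+: (gs s.length).1 := hchain 0 s.length (Nat.zero_le _)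
  have h3 : bres x s.length <+: s :=
    List.prefix_of_prefix_length_le h1 h2 (by rw [bres_length])
  exact h3.eq_of_length (by rw [bres_length])

lemma ext_long {p : Set (List Bool)} (hp : PerfectTree p) {f : List Bool → List ℕ}
    (hproper : ∀ x ∈ branches p,
      Filter.Tendsto (fun n => (f (bres x n)).length) Filter.atTop Filter.atTop) :
    ∀ s ∈ p, ∀ N : ℕ, ∃ t, t ∈ p ∧ s <+: t ∧ N < (f t).length := by
  intro s hs N
  obtain ⟨x, hx, hxs⟩ := branch_thru hp s hs
  have h1 : ∀ᶠ n in Filter.atTop, N < (f (bres x n)).length :=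
    (hproper x hx).eventually (Filter.eventually_gt_atTop N)
  have h2 : ∀ᶠ n in Filter.atTop, s.length ≤ n := Filter.eventually_ge_atTop s.length
  obtain ⟨n, hn1, hn2⟩ := (h1.and h2).exists
  exact ⟨bres x n, hx n, by rw [← hxs]; exact bres_mono x hn2, hn1⟩

lemma split_long {p : Set (List Bool)} (hp : PerfectTree p) {f : List Bool → List ℕ}
    (hproper : ∀ x ∈ branches p,
      Filter.Tendsto (fun n => (f (bres x n)).length) Filter.atTop Filter.atTop) :
    ∀ s ∈ p, ∀ N : ℕ, ∃ t₁ t₂, t₁ ∈ p ∧ t₂ ∈ p ∧ s <+: t₁ ∧ s <+: t₂ ∧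
      (¬ t₁ <+: t₂) ∧ (¬ t₂ <+: t₁) ∧ N < (f t₁).length ∧ N < (f t₂).length := by
  intro s hs N
  obtain ⟨u₁, hu₁, u₂, hu₂, k1, k2, k3, k4⟩ := hp.2.2 s hs
  obtain ⟨t₁, ht₁, e1, l1⟩ := ext_long hp hproper u₁ hu₁ N
  obtain ⟨t₂, ht₂, e2, l2⟩ := ext_long hp hproper u₂ hu₂ N
  exact ⟨t₁, t₂, ht₁, ht₂, k1.trans e1, k2.trans e2,
    incomp_lift e1 e2 k3 k4, incomp_lift e2 e1 k4 k3, l1, l2⟩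

theorem stmt12 (p : Set (List Bool)) (hp : PerfectTree p)
    (f : List Bool → List ℕ)
    (hmono : ∀ s ∈ p, ∀ t ∈ p, s <+: t → f s <+: f t)
    (hproper : ∀ x ∈ branches p,
      Filter.Tendsto (fun n => (f (bres x n)).length) Filter.atTop Filter.atTop)
    (F : (ℕ → Bool) → (ℕ → ℕ))
    (hF : ∀ x ∈ branches p, ∀ (n i : ℕ) (hi : i < (f (bres x n)).length),
      (f (bres x n))[i]'hi = F x i) :
    ∃ (h : ℕ → ℕ) (q : Set (List Bool)), q ⊆ p ∧ PerfectTree q ∧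
      ∀ x ∈ branches q, ¬ EvDiff h (F x) := by
  classical
  obtain ⟨⟨s₀, hs₀⟩, hclosed, hsplit⟩ := id hp
  choose g₁ g₂ m1 m2 pr1 pr2 inc1 inc2 len1 len2 using split_long hp hproper
  let E : List Bool → ℕ := fun σ => Encodable.encode σ.reverse
  let M : List Bool → ℕ := fun σ' => max (E (true::σ')) (E (false::σ'))
  obtain ⟨r, hrp, -, hrlen⟩ := ext_long hp hproper s₀ hs₀ (E [])
  let T : List Bool → {s : List Bool // s ∈ p} := fun σ =>
    List.rec ⟨r, hrp⟩ (fun b σ' ih =>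
      cond b ⟨g₁ ih.1 ih.2 (M σ'), m1 ih.1 ih.2 (M σ')⟩
             ⟨g₂ ih.1 ih.2 (M σ'), m2 ih.1 ih.2 (M σ')⟩) σ
  -- basic facts about T
  have hTc : ∀ σ' b, (T σ').1 <+: (T (b::σ')).1 := by
    intro σ' b
    cases b
    · exact pr2 _ _ _
    · exact pr1 _ _ _
  have hTinc : ∀ σ', (¬ (T (true::σ')).1 <+: (T (false::σ')).1) ∧
      (¬ (T (false::σ')).1 <+: (T (true::σ')).1) := by
    intro σ'
    exact ⟨inc1 _ _ _, inc2 _ _ _⟩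
  have hTlen : ∀ σ, E σ < (f (T σ).1).length := by
    intro σ
    cases σ with
    | nil => exact hrlen
    | cons b σ' =>
      cases b
      · exact lt_of_le_of_lt (le_max_right _ _) (len2 _ _ _)
      · exact lt_of_le_of_lt (le_max_left _ _) (len1 _ _ _)
  have hTmono : ∀ τ σ, σ <:+ τ → (T σ).1 <+: (T τ).1 := by
    intro τ
    induction τ with
    | nil =>
      intro σ h
      rw [List.suffix_nil.mp h]
    | cons b τ' ih =>
      intro σ h
      rcases List.suffix_cons_iff.mp h with rfl | h'
      · exact List.prefix_refl _
      · exact (ih σ h').trans (hTc τ' b)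
  have hTne : ∀ σ' b, (T σ').1 ≠ (T (b::σ')).1 := by
    intro σ' b heq
    cases b
    · exact (hTinc σ').2 (heq ▸ hTc σ' true)
    · exact (hTinc σ').1 (heq ▸ hTc σ' false)
  have hTlt : ∀ σ' b, (T σ').1.length < (T (b::σ')).1.length := fun σ' b =>
    lt_of_le_of_ne (hTc σ' b).length_le
      (fun h => hTne σ' b ((hTc σ' b).eq_of_length h))
  have hTstrict : ∀ σ τ, σ <:+ τ → σ ≠ τ → (T σ).1.length < (T τ).1.length := by
    intro σ τ h hne
    obtain ⟨c, hc⟩ := cons_suffix_of_proper h hne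
    exact lt_of_lt_of_le (hTlt σ c) (hTmono τ _ hc).length_le
  -- the key order-reflection property
  have hKey : ∀ n σ τ, σ.length + τ.length ≤ n → (T σ).1 <+: (T τ).1 → σ <:+ τ := by
    intro n
    induction n with
    | zero =>
      intro σ τ hn _
      have h1 : σ = [] := List.length_eq_zero_iff.mp (by omega)
      have h2 : τ = [] := List.length_eq_zero_iff.mp (by omega)
      subst h1; subst h2; exact List.suffix_refl _
    | succ n ih =>
      intro σ τ hn hpre
      cases σ with
      | nil => exact List.nil_suffix
      | cons b' σ'' =>
        cases τ with
        | nil =>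
          exfalso
          have h1 : (T ([] : List Bool)).1.length < (T (b'::σ'')).1.length :=
            hTstrict [] (b'::σ'') List.nil_suffix (by simp)
          exact absurd hpre.length_le (by omega)
        | cons b τ' =>
          have hτ' : (T τ').1 <+: (T (b::τ')).1 := hTc τ' b
          rcases le_total (T (b'::σ'')).1.length (T τ').1.length with hl | hl
          · have h1 : (T (b'::σ'')).1 <+: (T τ').1 :=
              List.prefix_of_prefix_length_le hpre hτ' hl
            have h2 : (b'::σ'') <:+ τ' := ih (b'::σ'') τ' (by simp at hn ⊢; omega) h1
            exact h2.trans (List.suffix_cons b τ')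
          · have hts : (T τ').1 <+: (T (b'::σ'')).1 :=
              List.prefix_of_prefix_length_le hτ' hpre hl
            have hsuf : τ' <:+ b'::σ'' := ih τ' (b'::σ'') (by simp at hn ⊢; omega) hts
            rcases List.suffix_cons_iff.mp hsuf with heq | hsuf'
            · subst heq
              exact List.suffix_cons b _
            · by_cases hq : τ' = σ''
              · subst hq
                -- σ = b'::τ', prefixe of the b-child: siblings force b' = b
                cases b <;> cases b'
                · exact List.suffix_refl _
                · exact absurd hpre (hTinc τ').1
                · exact absurd hpre (hTinc τ').2
                · exact List.suffix_refl _
              · obtain ⟨c, hc⟩ := cons_suffix_of_proper hsuf' hq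
                have h1 : (T (c::τ')).1 <+: (T (b'::σ'')).1 :=
                  hTmono _ _ (hc.trans (List.suffix_cons b' σ''))
                have h2 : (T (c::τ')).1 <+: (T (b::τ')).1 := h1.trans hpre
                have hcb : c = b := by
                  cases c <;> cases b
                  · rfl
                  · exact absurd h2 (hTinc τ').2
                  · exact absurd h2 (hTinc τ').1
                  · rfl
                subst hcb
                have h3 : (c::τ') <:+ (b'::σ'') := hc.trans (List.suffix_cons b' σ'')
                by_cases he : (c::τ') = (b'::σ'')
                · rw [← he]
                · exfalso
                  have h4 : (T (c::τ')).1.length < (T (b'::σ'')).1.length :=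
                    hTstrict _ _ h3 he
                  exact absurd hpre.length_le (by omega)
  -- the subtree q
  refine ⟨fun m => Option.rec (motive := fun _ => ℕ) 0 (fun ρ =>
      if hm : m < (f (T ρ.reverse).1).length then (f (T ρ.reverse).1)[m]'hm else 0)
      (Encodable.decode (α := List Bool) m),
    {s | ∃ σ, s <+: (T σ).1}, ?_, ?_, ?_⟩
  · rintro s ⟨σ, hσ⟩
    exact hclosed _ (T σ).2 s hσ
  · refine ⟨⟨r, ⟨[], List.prefix_refl r⟩⟩, ?_, ?_⟩
    · rintro s ⟨σ, hσ⟩ t ht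
      exact ⟨σ, ht.trans hσ⟩
    · rintro s ⟨σ, hσ⟩
      exact ⟨(T (true::σ)).1, ⟨true::σ, List.prefix_refl _⟩,
        (T (false::σ)).1, ⟨false::σ, List.prefix_refl _⟩,
        hσ.trans (hTc σ true), hσ.trans (hTc σ false),
        (hTinc σ).1, (hTinc σ).2⟩
  · intro x hx
    rintro ⟨n, hn⟩
    have hxp : x ∈ branches p := fun k => by
      obtain ⟨σ, hσ⟩ := hx k
      exact hclosed _ (T σ).2 _ hσ
    -- along x there are nodes of T of every depth
    have hS : ∀ k, ∃ σ : List Bool, σ.length = k ∧ bres x (T σ).1.length = (T σ).1 := by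
      intro k
      induction k with
      | zero =>
        refine ⟨[], rfl, ?_⟩
        obtain ⟨τ, hτ⟩ := hx (T ([] : List Bool)).1.length
        have h1 : (T ([] : List Bool)).1 <+: (T τ).1 := hTmono τ [] List.nil_suffix
        have h3 : bres x (T ([] : List Bool)).1.length <+: (T ([] : List Bool)).1 :=
          List.prefix_of_prefix_length_le hτ h1 (by rw [bres_length])
        exact h3.eq_of_length (by rw [bres_length])
      | succ k ih =>
        obtain ⟨σ, hlen, hpre⟩ := ih
        obtain ⟨τ, hτ⟩ := hx (max (T (true::σ)).1.length (T (false::σ)).1.length)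
        have hLm : (T σ).1.length ≤ max (T (true::σ)).1.length (T (false::σ)).1.length :=
          le_trans (le_of_lt (hTlt σ true)) (le_max_left _ _)
        have h1 : (T σ).1 <+: bres x (max (T (true::σ)).1.length (T (false::σ)).1.length) := by
          rw [← hpre]; exact bres_mono x hLm
        have h2 : (T σ).1 <+: (T τ).1 := h1.trans hτ
        have hsuf : σ <:+ τ := hKey (σ.length + τ.length) σ τ (le_refl _) h2
        have hne : σ ≠ τ := by
          intro he
          subst he
          have hm1 : max (T (true::σ)).1.length (T (false::σ)).1.length ≤ (T σ).1.length := by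
            have := hτ.length_le; rwa [bres_length] at this
          have hm2 : (T σ).1.length < max (T (true::σ)).1.length (T (false::σ)).1.length :=
            lt_of_lt_of_le (hTlt σ true) (le_max_left _ _)
          omega
        obtain ⟨c, hc⟩ := cons_suffix_of_proper hsuf hne
        have h3 : (T (c::σ)).1 <+: (T τ).1 := hTmono τ _ hc
        have h4 : (T (c::σ)).1.length ≤ max (T (true::σ)).1.length (T (false::σ)).1.length := by
          cases c
          · exact le_max_right _ _
          · exact le_max_left _ _
        have h5 : (T (c::σ)).1 <+: bres x (max (T (true::σ)).1.length (T (false::σ)).1.length) :=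
          List.prefix_of_prefix_length_le h3 hτ (by rw [bres_length]; exact h4)
        exact ⟨c::σ, by simp [hlen], eq_bres_of_prefix_bres h5⟩
    choose σs hσlen hσpre using hS
    have hinj : Function.Injective (fun k => E (σs k)) := by
      intro a b hab
      have h1 : (σs a).reverse = (σs b).reverse := Encodable.encode_injective hab
      have h2 : σs a = σs b := List.reverse_injective h1
      rw [← hσlen a, ← hσlen b, h2]
    obtain ⟨k, hk⟩ := inj_unbounded _ hinj n
    apply hn (E (σs k)) hk
    -- compute h at position E (σs k)
    have hval : (fun m => Option.rec (motive := fun _ => ℕ) 0 (fun ρ =>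
        if hm : m < (f (T ρ.reverse).1).length then (f (T ρ.reverse).1)[m]'hm else 0)
        (Encodable.decode (α := List Bool) m)) (E (σs k))
        = (f (T (σs k)).1)[E (σs k)]'(hTlen (σs k)) := by
      show Option.rec (motive := fun _ => ℕ) 0 _ (Encodable.decode (α := List Bool)
        (Encodable.encode (σs k).reverse)) = _
      rw [Encodable.encodek]
      show (if hm : E (σs k) < (f (T (σs k).reverse.reverse).1).length
        then (f (T (σs k).reverse.reverse).1)[E (σs k)]'hm else 0) = _
      simp only [List.reverse_reverse]
      rw [dif_pos (hTlen (σs k))]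
    rw [hval]
    have hlen' : E (σs k) < (f (bres x (T (σs k)).1.length)).length := by
      rw [hσpre k]; exact hTlen _
    have hFF := hF x hxp (T (σs k)).1.length (E (σs k)) hlen'
    rw [← hFF]
    have heq : f (T (σs k)).1 = f (bres x (T (σs k)).1.length) := by rw [hσpre k]
    simp only [heq]
end
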